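/- In any m-dimensional abstract rigidity matroid on K(V), for every V' ⊆ V with |V'| = m, the set bigstar(V') := K(V) \ K(V \ V') is a basis. -/

import Mathlib

open Matroid Set

/-- A circuit of a matroid: a minimal dependent set. -/
def Matroid.IsCircuit' {α : Type*} (M : Matroid α) (C : Set α) : Prop :=
  M.Dep C ∧ ∀ D, D ⊂ C → M.Indep D

/-- A cocircuit: a circuit of the dual matroid. -/
def Matroid.IsCocircuit' {α : Type*} (M : Matroid α) (C : Set α) : Prop :=
  M✶.IsCircuit' C

/-- A hyperplane: a maximal subset of the ground set not containing a basis. -/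
def Matroid.IsHyperplane {α : Type*} (M : Matroid α) (H : Set α) : Prop :=
  H ⊆ M.E ∧ (¬ ∃ B ⊆ H, M.IsBase B) ∧
    ∀ H', H ⊂ H' → H' ⊆ M.E → ∃ B ⊆ H', M.IsBase B

/-- The rank of a set: the size of a largest independent subset. -/
noncomputable def Matroid.rk {α : Type*} (M : Matroid α) (X : Set α) : ℕ :=
  sSup {n | ∃ I ⊆ X, M.Indep I ∧ I.ncard = n}

/-- `cK U` is the edge set of the complete graph on the vertex set `U`. -/
def cK {V : Type*} (U : Set V) : Set (Sym2 V) :=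
  {e | ¬ e.IsDiag ∧ ∀ v ∈ e, v ∈ U}

/-- The support (set of endpoints) of an edge set. -/
def supp {V : Type*} (E : Set (Sym2 V)) : Set V := {v | ∃ e ∈ E, v ∈ e}

/-- An edge set is rigid if its closure is the complete graph on its support. -/
def Rigid {V : Type*} (A : Matroid (Sym2 V)) (E : Set (Sym2 V)) : Prop :=
  A.closure E = cK (supp E)

/-- `A` is an `m`-dimensional abstract rigidity matroid on `K(W)`. -/
def IsARMOn {V : Type*} (m : ℕ) (W : Set V) (A : Matroid (Sym2 V)) : Prop :=
  A.E = cK W ∧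
  (∀ E F : Set (Sym2 V), E ⊆ cK W → F ⊆ cK W →
    (supp E ∩ supp F).ncard < m →
    A.closure (E ∪ F) ⊆ cK (supp E) ∪ cK (supp F)) ∧
  (∀ E F : Set (Sym2 V), E ⊆ cK W → F ⊆ cK W →
    Rigid A E → Rigid A F → m ≤ (supp E ∩ supp F).ncard →
    Rigid A (E ∪ F))

/-- The star of a vertex: all edges containing it. -/
def starv {V : Type*} (v : V) : Set (Sym2 V) := {e | ¬ e.IsDiag ∧ v ∈ e}

/-- `C` is a vertex star minus `m-1` edges. -/
def IsStarMinus {V : Type*} (m : ℕ) (C : Set (Sym2 V)) : Prop :=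
  ∃ v : V, ∃ D ⊆ starv v, D.ncard = m - 1 ∧ C = starv v \ D

/-- The valence (degree) of a vertex in an edge set. -/
noncomputable def valence {V : Type*} (C : Set (Sym2 V)) (v : V) : ℕ :=
  {e ∈ C | v ∈ e}.ncard

/-- `bigstar V' = K(V) \ K(V \ V')`. -/
def bigstar {V : Type*} (V' : Set V) : Set (Sym2 V) :=
  cK (univ : Set V) \ cK (V'ᶜ)

/-- The family `H_m(V)` of unions of two complete graphs covering `V` and
meeting in `m-1` vertices. -/
def HmFam (m : ℕ) (V : Type*) : Set (Set (Sym2 V)) :=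
  {H | ∃ V₁ V₂ : Set V, V₁ ∪ V₂ = univ ∧ (V₁ ∩ V₂).ncard = m - 1 ∧
    ¬ V₁ ⊆ V₂ ∧ ¬ V₂ ⊆ V₁ ∧ H = cK V₁ ∪ cK V₂}

/-- The family `H_m^{(1)}(K(X))` of sets `Δ_v^A` relative to a vertex set `X`. -/
def Hm1Fam {V : Type*} (m : ℕ) (X : Set V) : Set (Set (Sym2 V)) :=
  {H | ∃ v ∈ X, ∃ A ⊆ X \ {v}, A.ncard = m - 1 ∧
    H = cK ({v} ∪ A) ∪ cK (X \ {v})}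

section ARMAux

variable {V : Type*}

lemma cK_mono {U U' : Set V} (h : U ⊆ U') : cK U ⊆ cK U' :=
  fun _ he => ⟨he.1, fun v hv => h (he.2 v hv)⟩

lemma cK_subset_ground {U : Set V} : cK U ⊆ cK (univ : Set V) :=
  cK_mono (subset_univ U)

lemma cK_empty : cK (∅ : Set V) = ∅ := by
  ext e
  simp only [cK, mem_setOf_eq, mem_empty_iff_false, iff_false, not_and]
  induction e using Sym2.ind with
  | _ a b => exact fun _ h => h a (Sym2.mem_mk_left a b)

lemma supp_subset_of_subset_cK {E : Set (Sym2 V)} {U : Set V} (h : E ⊆ cK U) :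
    supp E ⊆ U := by
  rintro v ⟨e, heE, hve⟩
  exact (h heE).2 v hve

lemma supp_empty : supp (∅ : Set (Sym2 V)) = ∅ := by
  ext v; simp [supp]

lemma supp_union (E F : Set (Sym2 V)) : supp (E ∪ F) = supp E ∪ supp F := by
  ext v
  constructor
  · rintro ⟨e, (he | he), hv⟩
    exacts [Or.inl ⟨e, he, hv⟩, Or.inr ⟨e, he, hv⟩]
  · rintro (⟨e, he, hv⟩ | ⟨e, he, hv⟩)
    exacts [⟨e, Or.inl he, hv⟩, ⟨e, Or.inr he, hv⟩]

lemma supp_cK {U : Set V} (h : ∀ x ∈ U, ∃ y ∈ U, y ≠ x) : supp (cK U) = U := by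
  refine subset_antisymm (supp_subset_of_subset_cK subset_rfl) (fun x hx => ?_)
  obtain ⟨y, hy, hyx⟩ := h x hx
  refine ⟨s(x, y), ⟨?_, ?_⟩, Sym2.mem_mk_left x y⟩
  · rw [Sym2.mk_isDiag_iff]; exact fun hxy => hyx hxy.symm
  · intro v hv
    rcases Sym2.mem_iff.1 hv with rfl | rfl
    exacts [hx, hy]

lemma mem_bigstar {V' : Set V} {e : Sym2 V} :
    e ∈ bigstar V' ↔ ¬ e.IsDiag ∧ ∃ v ∈ e, v ∈ V' := by
  constructor
  · rintro ⟨⟨hd, -⟩, h2⟩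
    refine ⟨hd, ?_⟩
    by_contra h
    push_neg at h
    exact h2 ⟨hd, fun v hv => h v hv⟩
  · rintro ⟨hd, v, hv, hvV⟩
    exact ⟨⟨hd, fun _ _ => mem_univ _⟩, fun h => h.2 v hv hvV⟩

lemma bigstar_subset_ground {V' : Set V} : bigstar V' ⊆ cK (univ : Set V) :=
  diff_subset

lemma cK_insert_subset_bigstar {V' : Set V} {u : V} :
    cK (insert u V') ⊆ bigstar V' := by
  intro e he
  induction e using Sym2.ind with
  | _ a b =>
    rw [mem_bigstar]
    refine ⟨he.1, ?_⟩
    have hab : a ≠ b := fun h => he.1 (Sym2.mk_isDiag_iff.2 h)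
    have ha := he.2 a (Sym2.mem_mk_left a b)
    have hb := he.2 b (Sym2.mem_mk_right a b)
    rcases ha with rfl | ha
    · rcases hb with rfl | hb
      · exact absurd rfl hab
      · exact ⟨b, Sym2.mem_mk_right a b, hb⟩
    · exact ⟨a, Sym2.mem_mk_left a b, ha⟩

lemma cK_subset_bigstar_self {V' : Set V} : cK V' ⊆ bigstar V' := by
  intro e he
  induction e using Sym2.ind with
  | _ a b =>
    rw [mem_bigstar]
    exact ⟨he.1, a, Sym2.mem_mk_left a b, he.2 a (Sym2.mem_mk_left a b)⟩

variable {m : ℕ} {A : Matroid (Sym2 V)}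

lemma closure_subset_cK_supp (hm : 0 < m) (hA : IsARMOn m (univ : Set V) A)
    {E : Set (Sym2 V)} (hE : E ⊆ cK (univ : Set V)) :
    A.closure E ⊆ cK (supp E) := by
  have h := hA.2.1 E ∅ hE (empty_subset _)
    (by rw [supp_empty, inter_empty, ncard_empty]; exact hm)
  rw [union_empty] at h
  rw [supp_empty, cK_empty, union_empty] at h
  exact h

lemma rigid_cK (hm : 0 < m) (hA : IsARMOn m (univ : Set V) A) (U : Set V) :
    Rigid A (cK U) := by
  refine subset_antisymm (closure_subset_cK_supp hm hA cK_subset_ground) ?_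
  exact (cK_mono (supp_subset_of_subset_cK subset_rfl)).trans
    (A.subset_closure _ (by rw [hA.1]; exact cK_subset_ground))

end ARMAux

section ARMMain

variable {V : Type*} [Fintype V] [DecidableEq V] {m : ℕ} {A : Matroid (Sym2 V)}

lemma small_indep (hm : 0 < m) (hA : IsARMOn m (univ : Set V) A)
    {W : Set V} (hW : W.ncard ≤ m + 1) : A.Indep (cK W) := by
  rw [Matroid.indep_iff_forall_notMem_closure_diff
    (by rw [hA.1]; exact cK_subset_ground)]
  intro e he hecl
  induction e using Sym2.ind with
  | _ v w =>
    have hvw : v ≠ w := fun h => he.1 (Sym2.mk_isDiag_iff.2 h)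
    have hvW : v ∈ W := he.2 v (Sym2.mem_mk_left v w)
    have hwW : w ∈ W := he.2 w (Sym2.mem_mk_right v w)
    set F₁ : Set (Sym2 V) := {f ∈ cK W \ {s(v,w)} | w ∈ f} with hF₁
    set F₂ : Set (Sym2 V) := {f ∈ cK W \ {s(v,w)} | w ∉ f} with hF₂
    have hsplit : cK W \ {s(v,w)} = F₁ ∪ F₂ := by
      ext f
      by_cases hwf : w ∈ f <;> simp [hF₁, hF₂, hwf]
    have hs1 : supp F₁ ⊆ insert w (W \ {v, w}) := by
      rintro x ⟨f, ⟨⟨⟨hd, hfW⟩, hfe⟩, hwf⟩, hxf⟩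
      by_cases hxw : x = w
      · exact mem_insert_iff.2 (Or.inl hxw)
      · refine mem_insert_iff.2 (Or.inr ⟨hfW x hxf, ?_⟩)
        intro hx'
        rcases mem_insert_iff.1 hx' with h' | h'
        · exact hfe (Sym2.eq_of_ne_mem hvw (h' ▸ hxf) hwf
            (Sym2.mem_mk_left v w) (Sym2.mem_mk_right v w))
        · exact hxw (mem_singleton_iff.1 h')
    have hs2 : supp F₂ ⊆ W \ {w} := by
      rintro x ⟨f, ⟨⟨⟨hd, hfW⟩, hfe⟩, hwf⟩, hxf⟩
      exact ⟨hfW x hxf, fun h => hwf (h ▸ hxf)⟩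
    have hcard : (supp F₁ ∩ supp F₂).ncard < m := by
      have hsub : supp F₁ ∩ supp F₂ ⊆ W \ {v, w} := by
        rintro x ⟨h1, h2⟩
        rcases mem_insert_iff.1 (hs1 h1) with rfl | h
        · exact ((hs2 h2).2 rfl).elim
        · exact h
      have h1 := ncard_le_ncard hsub (toFinite _)
      have hvwsub : ({v, w} : Set V) ⊆ W := by
        rintro x (rfl | rfl) <;> assumption
      have h2 := ncard_diff hvwsub (toFinite _)
      have h3 : ({v, w} : Set V).ncard = 2 := ncard_pair hvw
      omega
    have hC := hA.2.1 F₁ F₂ (fun f hf => cK_subset_ground hf.1.1)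
      (fun f hf => cK_subset_ground hf.1.1) hcard
    rw [← hsplit] at hC
    rcases hC hecl with h | h
    · rcases mem_insert_iff.1 (hs1 (h.2 v (Sym2.mem_mk_left v w))) with h' | h'
      · exact hvw h'
      · exact h'.2 (mem_insert v _)
    · exact (hs2 (h.2 w (Sym2.mem_mk_right v w))).2 rfl

set_option linter.unusedSectionVars false in
lemma supp_cK_insert {V' : Set V} (hV'ne : V'.Nonempty) {u : V} (hu : u ∉ V') :
    supp (cK (insert u V')) = insert u V' := by
  refine supp_cK (fun x hx => ?_)
  rcases mem_insert_iff.1 hx with rfl | hx'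
  · obtain ⟨v, hv⟩ := hV'ne
    exact ⟨v, mem_insert_of_mem _ hv, fun h => hu (h ▸ hv)⟩
  · exact ⟨u, mem_insert u _, fun h => hu (h ▸ hx')⟩

lemma exists_rigid_spanning (hm : 0 < m) (hA : IsARMOn m (univ : Set V) A)
    {V' : Set V} (hV' : V'.ncard = m) {u₀ : V} (hu₀ : u₀ ∉ V')
    (T : Set V) (hT : T ⊆ V'ᶜ) :
    ∃ E ⊆ bigstar V', Rigid A E ∧ supp E = V' ∪ {u₀} ∪ T := by
  have hV'ne : V'.Nonempty := nonempty_of_ncard_ne_zero (by omega)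
  refine Set.Finite.induction_on (motive := fun T _ =>
    T ⊆ V'ᶜ → ∃ E ⊆ bigstar V', Rigid A E ∧ supp E = V' ∪ {u₀} ∪ T)
    T (toFinite T) ?_ ?_ hT
  · intro _
    refine ⟨cK (insert u₀ V'), cK_insert_subset_bigstar, rigid_cK hm hA _, ?_⟩
    rw [supp_cK_insert hV'ne hu₀, union_empty, union_singleton]
  · rintro u T' hu hT'fin IH hins
    have hT' : T' ⊆ V'ᶜ := (subset_insert u T').trans hins
    have huV' : u ∉ V' := hins (mem_insert u T')
    obtain ⟨E, hEb, hErig, hEsupp⟩ := IH hT'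
    have hsuppcK : supp (cK (insert u V')) = insert u V' := supp_cK_insert hV'ne huV'
    refine ⟨E ∪ cK (insert u V'), union_subset hEb cK_insert_subset_bigstar, ?_, ?_⟩
    · refine hA.2.2 E (cK (insert u V')) (hEb.trans bigstar_subset_ground)
        cK_subset_ground hErig (rigid_cK hm hA _) ?_
      have hsub : V' ⊆ supp E ∩ supp (cK (insert u V')) := fun x hx =>
        ⟨by rw [hEsupp]; exact Or.inl (Or.inl hx),
         by rw [hsuppcK]; exact mem_insert_of_mem _ hx⟩
      exact hV' ▸ ncard_le_ncard hsub (toFinite _)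
    · rw [supp_union, hEsupp, hsuppcK]
      ext x
      simp only [mem_union, mem_insert_iff, mem_singleton_iff]
      tauto

lemma closure_bigstar (hm : 0 < m) (hA : IsARMOn m (univ : Set V) A)
    (hV : m + 1 ≤ Fintype.card V) {V' : Set V} (hV' : V'.ncard = m) :
    A.closure (bigstar V') = cK (univ : Set V) := by
  obtain ⟨u₀, hu₀⟩ : ∃ u₀, u₀ ∉ V' := by
    by_contra h
    push_neg at h
    have huniv : V' = univ := eq_univ_of_forall h
    rw [huniv, ncard_univ, Nat.card_eq_fintype_card] at hV'
    omega
  obtain ⟨E, hEb, hErig, hEsupp⟩ := exists_rigid_spanning hm hA hV' hu₀ V'ᶜ subset_rfl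
  have hsupp : supp E = univ := by
    rw [hEsupp]
    ext x
    simp only [mem_union, mem_singleton_iff, mem_compl_iff, mem_univ, iff_true]
    tauto
  refine subset_antisymm (by rw [← hA.1]; exact A.closure_subset_ground _) ?_
  calc cK (univ : Set V) = A.closure E := by rw [hErig, hsupp]
    _ ⊆ A.closure (bigstar V') := A.closure_subset_closure hEb

lemma indep_bigstar_aux (hm : 0 < m) (hA : IsARMOn m (univ : Set V) A)
    {V' : Set V} (hV' : V'.ncard = m) (T : Set V) (hT : T ⊆ V'ᶜ) :
    A.Indep (bigstar V' ∩ cK (V' ∪ T)) := by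
  refine Set.Finite.induction_on (motive := fun T _ =>
    T ⊆ V'ᶜ → A.Indep (bigstar V' ∩ cK (V' ∪ T))) T (toFinite T) ?_ ?_ hT
  · intro _
    rw [union_empty, inter_eq_self_of_subset_right cK_subset_bigstar_self]
    exact small_indep hm hA (by omega)
  · rintro u T' hu hT'fin IH hins
    have hT' : T' ⊆ V'ᶜ := (subset_insert u T').trans hins
    have huV' : u ∉ V' := hins (mem_insert u T')
    have hB₀ : A.Indep (bigstar V' ∩ cK (V' ∪ T')) := IH hT'
    set B₀ : Set (Sym2 V) := bigstar V' ∩ cK (V' ∪ T') with hB₀def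
    set D : Set (Sym2 V) := (fun x => s(u, x)) '' V' with hDdef
    have hDg : D ⊆ cK (univ : Set V) := by
      rintro g ⟨z, hz, rfl⟩
      exact ⟨fun h => huV' ((Sym2.mk_isDiag_iff.1 h) ▸ hz), fun _ _ => mem_univ _⟩
    have hBD : bigstar V' ∩ cK (V' ∪ insert u T') = B₀ ∪ D := by
      ext e
      constructor
      · rintro ⟨hbs, hcK⟩
        by_cases hue : u ∈ e
        · right
          rw [mem_bigstar] at hbs
          obtain ⟨hd, v, hv, hvV'⟩ := hbs
          have huv : u ≠ v := fun h => huV' (h ▸ hvV')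
          have heq : e = s(u, v) := Sym2.eq_of_ne_mem huv hue hv
            (Sym2.mem_mk_left u v) (Sym2.mem_mk_right u v)
          exact ⟨v, hvV', heq.symm⟩
        · left
          refine ⟨hbs, hcK.1, fun v hv => ?_⟩
          rcases hcK.2 v hv with h | h
          · exact Or.inl h
          · rcases mem_insert_iff.1 h with rfl | h'
            · exact absurd hv hue
            · exact Or.inr h'
      · rintro (he | he)
        · exact ⟨he.1, cK_mono (union_subset_union_right V' (subset_insert u T')) he.2⟩
        · obtain ⟨x, hx, rfl⟩ := he
          have hux : u ≠ x := fun h => huV' (h ▸ hx)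
          refine ⟨mem_bigstar.2 ⟨fun h => hux (Sym2.mk_isDiag_iff.1 h),
            x, Sym2.mem_mk_right u x, hx⟩, fun h => hux (Sym2.mk_isDiag_iff.1 h),
            fun v hv => ?_⟩
          rcases Sym2.mem_iff.1 hv with rfl | rfl
          · exact Or.inr (mem_insert v _)
          · exact Or.inl hx
    rw [hBD]
    refine Set.Finite.induction_on (motive := fun D' _ => D' ⊆ D → A.Indep (B₀ ∪ D'))
      D (toFinite D) ?_ ?_ subset_rfl
    · intro _
      rwa [union_empty]
    · rintro f D' hf hD'fin IH2 hins2
      have hD' : D' ⊆ D := (subset_insert f D').trans hins2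
      have hI : A.Indep (B₀ ∪ D') := IH2 hD'
      obtain ⟨x, hxV', rfl⟩ := hins2 (mem_insert f D')
      have hux : u ≠ x := fun h => huV' (h ▸ hxV')
      rw [union_insert]
      by_cases hfmem : s(u, x) ∈ B₀ ∪ D'
      · rwa [insert_eq_of_mem hfmem]
      · rw [hI.insert_indep_iff_of_notMem hfmem]
        refine ⟨by rw [hA.1]; exact ⟨fun h => hux (Sym2.mk_isDiag_iff.1 h),
          fun _ _ => mem_univ _⟩, ?_⟩
        intro hcl
        have hsD : supp D' ⊆ insert u (V' \ {x}) := by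
          rintro y ⟨g, hg, hyg⟩
          obtain ⟨z, hz, rfl⟩ := hD' hg
          have hzx : z ≠ x := fun h => hf (h ▸ hg)
          rcases Sym2.mem_iff.1 hyg with rfl | rfl
          · exact mem_insert _ _
          · exact mem_insert_of_mem _ ⟨hz, hzx⟩
        have hsB : supp B₀ ⊆ V' ∪ T' :=
          supp_subset_of_subset_cK (fun g hg => hg.2)
        have hcard : (supp D' ∩ supp B₀).ncard < m := by
          have hsub : supp D' ∩ supp B₀ ⊆ V' \ {x} := by
            rintro y ⟨h1, h2⟩
            rcases mem_insert_iff.1 (hsD h1) with rfl | h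
            · rcases hsB h2 with h' | h'
              exacts [absurd h' huV', absurd h' hu]
            · exact h
          have h1 := ncard_le_ncard hsub (toFinite _)
          have h2 : (V' \ {x}).ncard < m :=
            hV' ▸ ncard_diff_singleton_lt_of_mem hxV' (toFinite _)
          omega
        have hC := hA.2.1 D' B₀ (hD'.trans hDg)
          (fun g hg => bigstar_subset_ground hg.1) hcard
        rw [union_comm] at hcl
        rcases hC hcl with h | h
        · rcases mem_insert_iff.1 (hsD (h.2 x (Sym2.mem_mk_right u x))) with h' | h'
          · exact hux h'.symm
          · exact h'.2 rfl
        · rcases hsB (h.2 u (Sym2.mem_mk_left u x)) with h' | h'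
          exacts [huV' h', hu h']

end ARMMain

theorem stmt_10 {V : Type*} [Fintype V] [DecidableEq V] (m : ℕ) (hm : 0 < m)
    (A : Matroid (Sym2 V)) (hA : IsARMOn m (univ : Set V) A)
    (hV : m + 1 ≤ Fintype.card V)
    (V' : Set V) (hV' : V'.ncard = m) :
    A.IsBase (bigstar V') := by
  have hind : A.Indep (bigstar V') := by
    have h := indep_bigstar_aux hm hA hV' V'ᶜ subset_rfl
    rwa [union_compl_self, inter_eq_self_of_subset_left bigstar_subset_ground] at h
  refine hind.isBase_of_ground_subset_closure ?_
  rw [hA.1, ← closure_bigstar hm hA hV hV']
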